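/- The set Λ_M of roots of the Carlitz polynomial [M](x) in a separable closure of F_p(t) forms an F_p[t]-module under the Carlitz action N·λ = [N](λ), and this module is isomorphic to F_p[t]/(M) when M is nonzero; in particular Λ_M is a free F_p[t]/(M)-module of rank 1. -/

import Mathlib

open Polynomial

/-- The image of `F_p[t]` in an extension `L` of `F_p(t)`. -/
noncomputable def carlitzMap (p : ℕ) [Fact p.Prime] (L : Type*) [Field L]
    [Algebra (RatFunc (ZMod p)) L] : Polynomial (ZMod p) →+* L :=
  (algebraMap (RatFunc (ZMod p)) L).comp (algebraMap (Polynomial (ZMod p)) (RatFunc (ZMod p)))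

/-- The basic Carlitz operator `[t](x) = x^p + t·x`. -/
noncomputable def carlitzT (p : ℕ) [Fact p.Prime] (L : Type*) [Field L]
    [Algebra (RatFunc (ZMod p)) L] (x : L) : L :=
  x ^ p + carlitzMap p L X * x

/-- The Carlitz polynomial action: `[M](x)`, defined by `[t^n](x) = [t]([t^{n-1}](x))`
and `F_p`-linear extension in `M`. -/
noncomputable def carlitz (p : ℕ) [Fact p.Prime] (L : Type*) [Field L]
    [Algebra (RatFunc (ZMod p)) L] (M : Polynomial (ZMod p)) (x : L) : L :=
  ∑ i ∈ M.support, carlitzMap p L (C (M.coeff i)) * (carlitzT p L)^[i] x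


namespace CarlitzAux
variable (p : ℕ) [Fact p.Prime]

abbrev Kp := RatFunc (ZMod p)
abbrev Lp := AlgebraicClosure (RatFunc (ZMod p))

instance : CharP (Lp p) p :=
  charP_of_injective_algebraMap (algebraMap (ZMod p) (Lp p)).injective p
instance : CharP (Kp p) p :=
  charP_of_injective_algebraMap (algebraMap (ZMod p) (Kp p)).injective p

lemma carlitzMap_C (a : ZMod p) :
    carlitzMap p (Lp p) (C a) = algebraMap (ZMod p) (Lp p) a := by
  simp only [carlitzMap, RingHom.comp_apply]
  rw [IsScalarTower.algebraMap_apply (ZMod p) (Kp p) (Lp p),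
    IsScalarTower.algebraMap_apply (ZMod p) (Polynomial (ZMod p)) (Kp p),
    Polynomial.algebraMap_eq]

noncomputable def Tlin : Lp p →ₗ[ZMod p] Lp p where
  toFun := carlitzT p (Lp p)
  map_add' x y := by
    simp only [carlitzT, add_pow_char]; ring
  map_smul' a x := by
    simp only [carlitzT, Algebra.smul_def, mul_pow, ← map_pow, ZMod.pow_card,
      RingHom.id_apply]
    ring

noncomputable def phi (N : Polynomial (ZMod p)) : Module.End (ZMod p) (Lp p) :=
  aeval (Tlin p) N

lemma carlitz_eq_phi (M : Polynomial (ZMod p)) (x : Lp p) :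
    carlitz p (Lp p) M x = phi p M x := by
  have h : phi p M = ∑ i ∈ M.support, phi p (C (M.coeff i) * X ^ i) := by
    simp only [phi]
    conv_lhs => rw [M.as_sum_support_C_mul_X_pow]
    rw [map_sum]
  rw [h, carlitz]
  rw [LinearMap.sum_apply]
  refine Finset.sum_congr rfl fun i _ => ?_
  rw [phi, map_mul, map_pow, aeval_C, aeval_X, Module.End.mul_apply,
    Module.algebraMap_end_apply, Module.End.pow_apply, carlitzMap_C,
    Algebra.smul_def]
  rfl
noncomputable def tK : Kp p := algebraMap (Polynomial (ZMod p)) (Kp p) X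

noncomputable def gK : ℕ → (Kp p)[X] :=
  fun i => (fun q => q ^ p + C (tK p) * q)^[i] X

lemma gK_zero : gK p 0 = X := rfl

lemma gK_succ (i : ℕ) : gK p (i + 1) = gK p i ^ p + C (tK p) * gK p i := by
  simp only [gK, Function.iterate_succ_apply']

lemma monic_gK (i : ℕ) : (gK p i).Monic ∧ (gK p i).natDegree = p ^ i := by
  have hp1 : 1 < p := (Fact.out : p.Prime).one_lt
  induction i with
  | zero => exact ⟨monic_X, natDegree_X⟩
  | succ i ih =>
    obtain ⟨hm, hd⟩ := ih
    have hmp : (gK p i ^ p).Monic := (hm.pow p)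
    have hdp : (gK p i ^ p).natDegree = p ^ (i + 1) := by
      rw [natDegree_pow, hd, pow_succ, mul_comm]
    have hlt : (C (tK p) * gK p i).degree < (gK p i ^ p).degree := by
      apply lt_of_le_of_lt (degree_mul_le _ _)
      have h1 : (C (tK p)).degree ≤ 0 := degree_C_le
      have h2 : (gK p i).degree = (p ^ i : ℕ) := (degree_eq_natDegree hm.ne_zero).trans (by rw [hd])
      have h3 : (gK p i ^ p).degree = (p ^ (i + 1) : ℕ) :=
        (degree_eq_natDegree hmp.ne_zero).trans (by rw [hdp])
      rw [h3]
      apply lt_of_le_of_lt (add_le_add h1 le_rfl)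
      rw [zero_add, h2]
      exact_mod_cast Nat.pow_lt_pow_right hp1 (Nat.lt_succ_self i)
    constructor
    · rw [gK_succ]; exact hmp.add_of_left hlt
    · rw [gK_succ, natDegree_eq_of_degree_eq (degree_add_eq_left_of_degree_lt hlt), hdp]
lemma derivative_gK (i : ℕ) : derivative (gK p i) = C (tK p ^ i) := by
  induction i with
  | zero => simp [gK_zero]
  | succ i ih =>
    rw [gK_succ, derivative_add, derivative_pow, derivative_C_mul, ih]
    have hz : ((p : ℕ) : Kp p) = 0 := CharP.cast_eq_zero _ p
    rw [hz, C_0, zero_mul, zero_mul, zero_add, ← C_mul, ← pow_succ']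

noncomputable def QM (M : Polynomial (ZMod p)) : (Kp p)[X] :=
  ∑ i ∈ M.support, C (algebraMap (Polynomial (ZMod p)) (Kp p) (C (M.coeff i))) * gK p i

lemma coeff_QM_top (M : Polynomial (ZMod p)) (hM : M ≠ 0) :
    (QM p M).coeff (p ^ M.natDegree) =
      algebraMap (Polynomial (ZMod p)) (Kp p) (C M.leadingCoeff) := by
  have hp1 : 1 < p := (Fact.out : p.Prime).one_lt
  rw [QM, finset_sum_coeff]
  rw [Finset.sum_eq_single_of_mem M.natDegree (natDegree_mem_support_of_nonzero hM)]
  · have h := (monic_gK p M.natDegree).1.coeff_natDegree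
    rw [(monic_gK p M.natDegree).2] at h
    rw [coeff_C_mul, h, mul_one, leadingCoeff]
  · intro i hi hne
    have hilt : i < M.natDegree := lt_of_le_of_ne (le_natDegree_of_mem_supp i hi) hne
    rw [coeff_C_mul, coeff_eq_zero_of_natDegree_lt
      (show (gK p i).natDegree < p ^ M.natDegree by
        rw [(monic_gK p i).2]; exact Nat.pow_lt_pow_right hp1 hilt), mul_zero]

lemma QM_ne_zero (M : Polynomial (ZMod p)) (hM : M ≠ 0) : QM p M ≠ 0 := by
  intro h
  have hc := coeff_QM_top p M hM
  rw [h, coeff_zero] at hc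
  have : (C M.leadingCoeff : Polynomial (ZMod p)) ≠ 0 :=
    C_ne_zero.mpr (leadingCoeff_ne_zero.mpr hM)
  have h2 := (IsFractionRing.injective (Polynomial (ZMod p)) (Kp p)).ne this
  rw [map_zero] at h2
  exact h2 hc.symm

lemma natDegree_QM (M : Polynomial (ZMod p)) (hM : M ≠ 0) :
    (QM p M).natDegree = p ^ M.natDegree := by
  have hp1 : 1 < p := (Fact.out : p.Prime).one_lt
  refine le_antisymm ?_ ?_
  · refine (natDegree_sum_le _ _).trans ?_
    rw [Finset.fold_max_le]
    refine ⟨Nat.zero_le _, fun i hi => ?_⟩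
    refine (natDegree_C_mul_le _ _).trans ?_
    rw [(monic_gK p i).2]
    exact Nat.pow_le_pow_right (le_of_lt hp1) (le_natDegree_of_mem_supp i hi)
  · apply le_natDegree_of_ne_zero
    rw [coeff_QM_top p M hM]
    have : (C M.leadingCoeff : Polynomial (ZMod p)) ≠ 0 :=
      C_ne_zero.mpr (leadingCoeff_ne_zero.mpr hM)
    have h2 := (IsFractionRing.injective (Polynomial (ZMod p)) (Kp p)).ne this
    rwa [map_zero] at h2

lemma derivative_QM (M : Polynomial (ZMod p)) :
    derivative (QM p M) = C (algebraMap (Polynomial (ZMod p)) (Kp p) M) := by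
  rw [QM, map_sum]
  conv_rhs => rw [M.as_sum_support_C_mul_X_pow, map_sum, map_sum]
  refine Finset.sum_congr rfl fun i _ => ?_
  rw [derivative_C_mul, derivative_gK]
  simp [tK, C_mul, C_pow, map_pow]

lemma separable_QM (M : Polynomial (ZMod p)) (hM : M ≠ 0) : (QM p M).Separable := by
  have hm : algebraMap (Polynomial (ZMod p)) (Kp p) M ≠ 0 := by
    have h2 := (IsFractionRing.injective (Polynomial (ZMod p)) (Kp p)).ne hM
    rwa [map_zero] at h2
  refine ⟨0, C (algebraMap (Polynomial (ZMod p)) (Kp p) M)⁻¹, ?_⟩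
  rw [derivative_QM, zero_mul, zero_add, ← C_mul, inv_mul_cancel₀ hm, C_1]
lemma eval_map_gK (i : ℕ) (x : Lp p) :
    eval x ((gK p i).map (algebraMap (Kp p) (Lp p))) = (carlitzT p (Lp p))^[i] x := by
  induction i with
  | zero => simp [gK_zero]
  | succ i ih =>
    rw [gK_succ, Function.iterate_succ_apply', Polynomial.map_add, Polynomial.map_pow,
      Polynomial.map_mul, Polynomial.map_C, eval_add, eval_pow, eval_mul, eval_C, ih,
      carlitzT]
    rfl

lemma aeval_QM (M : Polynomial (ZMod p)) (x : Lp p) :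
    aeval x (QM p M) = carlitz p (Lp p) M x := by
  rw [aeval_def, ← eval_map, QM, Polynomial.map_sum, eval_finset_sum, carlitz]
  refine Finset.sum_congr rfl fun i _ => ?_
  rw [Polynomial.map_mul, Polynomial.map_C, eval_mul, eval_C, eval_map_gK]
  rfl

def VM (M : Polynomial (ZMod p)) : Set (Lp p) := {x | carlitz p (Lp p) M x = 0}

lemma VM_eq_rootSet (M : Polynomial (ZMod p)) (hM : M ≠ 0) :
    VM p M = (QM p M).rootSet (Lp p) := by
  ext x
  rw [mem_rootSet, aeval_QM]
  exact ⟨fun h => ⟨QM_ne_zero p M hM, h⟩, fun h => h.2⟩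

lemma VM_finite (M : Polynomial (ZMod p)) (hM : M ≠ 0) : (VM p M).Finite := by
  rw [VM_eq_rootSet p M hM]
  exact (QM p M).rootSet_finite (Lp p)

lemma card_VM (M : Polynomial (ZMod p)) (hM : M ≠ 0) :
    Nat.card (VM p M) = p ^ M.natDegree := by
  rw [VM_eq_rootSet p M hM]
  rw [Nat.card_eq_fintype_card]
  rw [card_rootSet_eq_natDegree (separable_QM p M hM)
    (IsAlgClosed.splits ((QM p M).map (algebraMap (Kp p) (Lp p))))]
  exact natDegree_QM p M hM

lemma VM_subset_sep (M : Polynomial (ZMod p)) (hM : M ≠ 0) :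
    VM p M ⊆ (separableClosure (Kp p) (Lp p) : Set (Lp p)) := by
  intro x hx
  have hx' : aeval x (QM p M) = 0 := by rw [aeval_QM]; exact hx
  have : IsSeparable (Kp p) x :=
    (separable_QM p M hM).of_dvd (minpoly.dvd (Kp p) x hx')
  exact mem_separableClosure_iff.mpr this
lemma phi_mul (A B : Polynomial (ZMod p)) (x : Lp p) :
    phi p (A * B) x = phi p A (phi p B x) := by
  simp only [phi, map_mul, Module.End.mul_apply]

lemma phi_add (A B : Polynomial (ZMod p)) (x : Lp p) :
    phi p (A + B) x = phi p A x + phi p B x := by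
  simp only [phi, map_add, LinearMap.add_apply]

lemma mem_VM (M : Polynomial (ZMod p)) (x : Lp p) : x ∈ VM p M ↔ phi p M x = 0 := by
  rw [VM, Set.mem_setOf_eq, carlitz_eq_phi]

def IsGen (M : Polynomial (ZMod p)) (x : Lp p) : Prop :=
  phi p M x = 0 ∧ ∀ N, phi p N x = 0 → M ∣ N

lemma natDegree_pos_of_prime (q : Polynomial (ZMod p)) (hq : Prime q) : 0 < q.natDegree := by
  rcases Nat.eq_zero_or_pos q.natDegree with h | h
  · exfalso
    rw [Polynomial.natDegree_eq_zero] at h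
    obtain ⟨a, rfl⟩ := h
    rcases eq_or_ne a 0 with rfl | ha
    · exact hq.ne_zero (by simp)
    · exact hq.not_unit (isUnit_C.mpr (isUnit_iff_ne_zero.mpr ha))
  · exact h

lemma exists_gen (M : Polynomial (ZMod p)) (hM : M ≠ 0) : ∃ x, IsGen p M x := by
  classical
  have hp1 : 1 < p := (Fact.out : p.Prime).one_lt
  revert hM
  refine UniqueFactorizationMonoid.induction_on_coprime
    (P := fun M => M ≠ 0 → ∃ x, IsGen p M x) M (fun h => absurd rfl h) ?_ ?_ ?_
  · -- units
    intro u hu _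
    exact ⟨0, (phi p u).map_zero, fun N _ => hu.dvd⟩
  · -- prime powers
    intro q i hq _
    rcases Nat.eq_zero_or_pos i with rfl | hi
    · exact ⟨0, by rw [pow_zero]; exact (phi p 1).map_zero, fun N _ => by
        rw [pow_zero]; exact one_dvd N⟩
    obtain ⟨k, rfl⟩ : ∃ k, i = k + 1 := ⟨i - 1, (Nat.succ_pred_eq_of_pos hi).symm⟩
    have hq0 : q ≠ 0 := hq.ne_zero
    have hd : 0 < q.natDegree := natDegree_pos_of_prime p q hq
    have hsub : VM p (q ^ k) ⊆ VM p (q ^ (k + 1)) := by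
      intro x hx
      rw [mem_VM] at hx ⊢
      rw [pow_succ, mul_comm, phi_mul, hx, (phi p q).map_zero]
    have hcard : Nat.card (VM p (q ^ k)) < Nat.card (VM p (q ^ (k + 1))) := by
      rw [card_VM p _ (pow_ne_zero _ hq0), card_VM p _ (pow_ne_zero _ hq0),
        natDegree_pow, natDegree_pow]
      exact Nat.pow_lt_pow_right hp1
        (Nat.mul_lt_mul_of_lt_of_le (Nat.lt_succ_self k) le_rfl hd)
    have hnsub : ¬ VM p (q ^ (k + 1)) ⊆ VM p (q ^ k) := by
      intro hss
      have := Nat.card_mono (VM_finite p (q ^ k) (pow_ne_zero _ hq0)) hss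
      omega
    obtain ⟨x, hx1, hx2⟩ := Set.not_subset.mp hnsub
    refine ⟨x, (mem_VM p _ x).mp hx1, fun N hN => ?_⟩
    set g := EuclideanDomain.gcd N (q ^ (k + 1)) with hgdef
    have hgx : phi p g x = 0 := by
      rw [hgdef, EuclideanDomain.gcd_eq_gcd_ab N (q ^ (k + 1))]
      have h1 : phi p (N * EuclideanDomain.gcdA N (q ^ (k + 1))) x = 0 := by
        rw [mul_comm, phi_mul, hN, (phi p _).map_zero]
      have h2 : phi p (q ^ (k + 1) * EuclideanDomain.gcdB N (q ^ (k + 1))) x = 0 := by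
        rw [mul_comm, phi_mul, (mem_VM p _ x).mp hx1, (phi p _).map_zero]
      rw [phi_add, h1, h2, add_zero]
    have hgdvd : g ∣ q ^ (k + 1) := EuclideanDomain.gcd_dvd_right _ _
    obtain ⟨j, hj, hassoc⟩ := (dvd_prime_pow hq (k + 1)).mp hgdvd
    rcases Nat.lt_or_ge j (k + 1) with hjlt | hjge
    · exfalso
      apply hx2
      rw [mem_VM]
      obtain ⟨u, hu⟩ := hassoc
      have hqj : phi p (q ^ j) x = 0 := by
        rw [← hu, mul_comm, phi_mul, hgx, (phi p _).map_zero]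
      have : (q : Polynomial (ZMod p)) ^ k = q ^ (k - j) * q ^ j := by
        rw [← pow_add]
        congr 1
        omega
      rw [this, phi_mul, hqj, (phi p _).map_zero]
    · have hj' : j = k + 1 := le_antisymm hj hjge
      subst hj'
      exact hassoc.symm.dvd.trans (EuclideanDomain.gcd_dvd_left _ _)
  · -- coprime products
    intro A B hrel hA hB hAB
    rw [mul_ne_zero_iff] at hAB
    obtain ⟨x, hxA, hgenA⟩ := hA hAB.1
    obtain ⟨y, hyB, hgenB⟩ := hB hAB.2
    have hcop : IsCoprime A B := isRelPrime_iff_isCoprime.mp hrel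
    refine ⟨x + y, ?_, ?_⟩
    · rw [(phi p (A * B)).map_add]
      rw [show A * B = B * A from mul_comm A B] at *
      rw [phi_mul, hxA, (phi p B).map_zero, mul_comm B A, phi_mul, hyB,
        (phi p A).map_zero, add_zero]
    · intro N hN
      have h1 : phi p (N * B) x = 0 := by
        have e1 : phi p (N * B) (x + y) = 0 := by
          rw [mul_comm, phi_mul, hN, (phi p B).map_zero]
        have e2 : phi p (N * B) y = 0 := by
          rw [phi_mul, hyB, (phi p N).map_zero]
        have := (phi p (N * B)).map_add x y
        rw [e1, e2, add_zero] at this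
        exact this.symm
      have h2 : phi p (N * A) y = 0 := by
        have e1 : phi p (N * A) (x + y) = 0 := by
          rw [mul_comm, phi_mul, hN, (phi p A).map_zero]
        have e2 : phi p (N * A) x = 0 := by
          rw [phi_mul, hxA, (phi p N).map_zero]
        have := (phi p (N * A)).map_add x y
        rw [e1, e2, zero_add] at this
        exact this.symm
      exact hcop.mul_dvd (hcop.dvd_of_dvd_mul_right (hgenA _ h1))
        ((hcop.symm.dvd_of_dvd_mul_right (hgenB _ h2)))
lemma phi_sub (A B : Polynomial (ZMod p)) (x : Lp p) :
    phi p (A - B) x = phi p A x - phi p B x := by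
  simp only [phi, map_sub, LinearMap.sub_apply]

lemma card_quot (M : Polynomial (ZMod p)) (hM : M ≠ 0) :
    Nat.card (Polynomial (ZMod p) ⧸ Ideal.span {M}) = p ^ M.natDegree := by
  show Nat.card (AdjoinRoot M) = p ^ M.natDegree
  rw [Nat.card_congr (AdjoinRoot.powerBasis hM).basis.equivFun.toEquiv, Nat.card_fun,
    Nat.card_zmod, Nat.card_eq_fintype_card, Fintype.card_fin, AdjoinRoot.powerBasis_dim hM]

theorem statement3 (p : ℕ) [Fact p.Prime] (M : Polynomial (ZMod p))
    (hM : M ≠ 0) :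
    ∀ Λ : Set (AlgebraicClosure (RatFunc (ZMod p))),
      Λ = {l | l ∈ separableClosure (RatFunc (ZMod p)) (AlgebraicClosure (RatFunc (ZMod p))) ∧
              carlitz p (AlgebraicClosure (RatFunc (ZMod p))) M l = 0} →
      (∀ α β, α ∈ Λ → β ∈ Λ → α + β ∈ Λ) ∧
      (∀ (N : Polynomial (ZMod p)) (α), α ∈ Λ →
          carlitz p (AlgebraicClosure (RatFunc (ZMod p))) N α ∈ Λ) ∧
      ∃ e : Λ → Polynomial (ZMod p) ⧸ Ideal.span {M},
        Function.Bijective e ∧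
        (∀ (α β : AlgebraicClosure (RatFunc (ZMod p))) (hα : α ∈ Λ) (hβ : β ∈ Λ)
            (hab : α + β ∈ Λ), e ⟨α + β, hab⟩ = e ⟨α, hα⟩ + e ⟨β, hβ⟩) ∧
        (∀ (N : Polynomial (ZMod p)) (α : AlgebraicClosure (RatFunc (ZMod p)))
            (hα : α ∈ Λ)
            (hNα : carlitz p (AlgebraicClosure (RatFunc (ZMod p))) N α ∈ Λ),
          e ⟨carlitz p (AlgebraicClosure (RatFunc (ZMod p))) N α, hNα⟩ =
            Ideal.Quotient.mk (Ideal.span {M}) N * e ⟨α, hα⟩) := by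
  intro Λ hΛ
  have hΛ' : Λ = VM p M := by
    rw [hΛ]
    ext l
    exact ⟨fun h => h.2, fun h => ⟨VM_subset_sep p M hM h, h⟩⟩
  subst hΛ'
  have hmemiff : ∀ x : Lp p, x ∈ VM p M ↔ phi p M x = 0 := mem_VM p M
  refine ⟨?_, ?_, ?_⟩
  · intro α β hα hβ
    rw [hmemiff] at *
    rw [(phi p M).map_add, hα, hβ, add_zero]
  · intro N α hα
    rw [hmemiff] at *
    rw [carlitz_eq_phi, ← phi_mul, mul_comm, phi_mul, hα, (phi p N).map_zero]
  -- the isomorphism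
  obtain ⟨x0, hx0, hgen⟩ := exists_gen p M hM
  set Q := Polynomial (ZMod p) ⧸ Ideal.span {M} with hQ
  have hmksurj : Function.Surjective (⇑(Ideal.Quotient.mk (Ideal.span (α := Polynomial (ZMod p)) {M}))) :=
    Ideal.Quotient.mk_surjective
  have key : ∀ N N' : Polynomial (ZMod p), Ideal.Quotient.mk (Ideal.span {M}) N = Ideal.Quotient.mk (Ideal.span {M}) N' → phi p N x0 = phi p N' x0 := by
    intro N N' h
    have hd : M ∣ N - N' := Ideal.mem_span_singleton.mp (Ideal.Quotient.eq.mp h)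
    obtain ⟨c, hc⟩ := hd
    have : phi p (N - N') x0 = 0 := by
      rw [hc, mul_comm, phi_mul, hx0, (phi p c).map_zero]
    rw [phi_sub] at this
    exact sub_eq_zero.mp this
  set F : Q → Lp p := fun c => phi p (Function.surjInv hmksurj c) x0 with hF
  have hFmk : ∀ N, F (Ideal.Quotient.mk (Ideal.span {M}) N) = phi p N x0 := by
    intro N
    exact key _ _ (Function.surjInv_eq hmksurj (Ideal.Quotient.mk (Ideal.span {M}) N))
  have hFmem : ∀ c, F c ∈ VM p M := by
    intro c
    obtain ⟨N, rfl⟩ := hmksurj c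
    rw [hFmk, hmemiff, ← phi_mul, mul_comm, phi_mul, hx0, (phi p N).map_zero]
  set G : Q → (VM p M) := fun c => ⟨F c, hFmem c⟩ with hG
  have hGinj : Function.Injective G := by
    intro c c' h
    obtain ⟨N, rfl⟩ := hmksurj c
    obtain ⟨N', rfl⟩ := hmksurj c'
    have hFF : phi p N x0 = phi p N' x0 := by
      have h2 := congrArg Subtype.val h
      simp only [hG] at h2
      rwa [hFmk, hFmk] at h2
    have : phi p (N - N') x0 = 0 := by rw [phi_sub, hFF, sub_self]
    have hdvd : M ∣ N - N' := hgen _ this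
    exact Ideal.Quotient.eq.mpr (Ideal.mem_span_singleton.mpr hdvd)
  have hfinV : Finite (VM p M) := (VM_finite p M hM).to_subtype
  have hGbij : Function.Bijective G := by
    rw [Nat.bijective_iff_injective_and_card]
    exact ⟨hGinj, by rw [card_quot p M hM, ← card_VM p M hM]⟩
  set E := Equiv.ofBijective G hGbij with hE
  have hEval : ∀ c, (E c : Lp p) = F c := fun c => rfl
  refine ⟨E.symm, E.symm.bijective, ?_, ?_⟩
  · intro α β hα hβ hab
    rw [Equiv.symm_apply_eq]
    apply Subtype.ext
    rw [hEval]
    obtain ⟨nα, hnα⟩ := hmksurj (E.symm ⟨α, hα⟩)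
    obtain ⟨nβ, hnβ⟩ := hmksurj (E.symm ⟨β, hβ⟩)
    have hvα : F (E.symm ⟨α, hα⟩) = α := by
      have := congrArg Subtype.val (E.apply_symm_apply ⟨α, hα⟩)
      rwa [hEval] at this
    have hvβ : F (E.symm ⟨β, hβ⟩) = β := by
      have := congrArg Subtype.val (E.apply_symm_apply ⟨β, hβ⟩)
      rwa [hEval] at this
    have hvα' : phi p nα x0 = α := by rw [← hFmk nα, hnα]; exact hvα
    have hvβ' : phi p nβ x0 = β := by rw [← hFmk nβ, hnβ]; exact hvβ
    rw [← hnα, ← hnβ, ← map_add, hFmk, phi_add, hvα', hvβ']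
  · intro N α hα hNα
    rw [Equiv.symm_apply_eq]
    apply Subtype.ext
    rw [hEval]
    obtain ⟨nα, hnα⟩ := hmksurj (E.symm ⟨α, hα⟩)
    have hvα : F (E.symm ⟨α, hα⟩) = α := by
      have := congrArg Subtype.val (E.apply_symm_apply ⟨α, hα⟩)
      rwa [hEval] at this
    have hvα' : phi p nα x0 = α := by rw [← hFmk nα, hnα]; exact hvα
    rw [← hnα, ← map_mul, hFmk, phi_mul, hvα']
    exact carlitz_eq_phi p N α

end CarlitzAux

/-- the set `Λ_M` of roots of the Carlitz polynomial `[M](x)` in a separable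
closure of `F_p(t)` is an `F_p[t]`-module under the Carlitz action `N·λ = [N](λ)`,
isomorphic to `F_p[t]/(M)` for nonzero `M`; in particular it is free of rank 1 over
`F_p[t]/(M)`. -/
theorem carlitz_torsion_module_iso (p : ℕ) [Fact p.Prime] (M : Polynomial (ZMod p))
    (hM : M ≠ 0) :
    ∀ Λ : Set (AlgebraicClosure (RatFunc (ZMod p))),
      Λ = {l | l ∈ separableClosure (RatFunc (ZMod p)) (AlgebraicClosure (RatFunc (ZMod p))) ∧
              carlitz p (AlgebraicClosure (RatFunc (ZMod p))) M l = 0} →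
      (∀ α β, α ∈ Λ → β ∈ Λ → α + β ∈ Λ) ∧
      (∀ (N : Polynomial (ZMod p)) (α), α ∈ Λ →
          carlitz p (AlgebraicClosure (RatFunc (ZMod p))) N α ∈ Λ) ∧
      ∃ e : Λ → Polynomial (ZMod p) ⧸ Ideal.span {M},
        Function.Bijective e ∧
        (∀ (α β : AlgebraicClosure (RatFunc (ZMod p))) (hα : α ∈ Λ) (hβ : β ∈ Λ)
            (hab : α + β ∈ Λ), e ⟨α + β, hab⟩ = e ⟨α, hα⟩ + e ⟨β, hβ⟩) ∧
        (∀ (N : Polynomial (ZMod p)) (α : AlgebraicClosure (RatFunc (ZMod p)))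
            (hα : α ∈ Λ)
            (hNα : carlitz p (AlgebraicClosure (RatFunc (ZMod p))) N α ∈ Λ),
          e ⟨carlitz p (AlgebraicClosure (RatFunc (ZMod p))) N α, hNα⟩ =
            Ideal.Quotient.mk (Ideal.span {M}) N * e ⟨α, hα⟩) :=
  CarlitzAux.statement3 p M hM
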